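/- For fixed d ≥ 1 and any 0 ≤ k ≤ d−1, the sequence c_n(k) counting d-legal words of weight n or n+1 with prescribed prefix restrictions satisfies c_n(k) ≥ 2^{⌈n/2⌉}, and c_n(k) ~ r_k·λ(d)^{n/2} as n → ∞ for some constant r_k > 0, where λ(d) is the unique positive solution of λ^{d−1/2}(λ−2) = 1. -/

import Mathlib

/-- The four-letter alphabet `Σ = {a, b, A, B}`. -/
inductive Letter | a | b | A | B
deriving DecidableEq

/-- Letter weights: `w(a)=w(b)=2`, `w(A)=w(B)=3`. -/
def Letter.wt : Letter → ℕ
  | .a => 2 | .b => 2 | .A => 3 | .B => 3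

/-- The weight of a word is the sum of the weights of its letters. -/
def wtWord (x : List Letter) : ℕ := (x.map Letter.wt).sum

/-- A word `x` (0-indexed) is `d`-legal if whenever `x_m = A` then `x_{m−i} = a` for
`1 ≤ i ≤ min(d−1, m)`, and if `m ≥ d` then `x_{m−d} ∈ {a, A}`; and symmetrically for
`B` with `b`. -/
def dLegal (d : ℕ) (x : List Letter) : Prop :=
  ∀ m : ℕ, ∀ hm : m < x.length,
    (x.get ⟨m, hm⟩ = .A →
      (∀ i, 1 ≤ i → i ≤ d - 1 → i ≤ m → x.get ⟨m - i, by omega⟩ = .a) ∧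
      (d ≤ m → x.get ⟨m - d, by omega⟩ = .a ∨ x.get ⟨m - d, by omega⟩ = .A)) ∧
    (x.get ⟨m, hm⟩ = .B →
      (∀ i, 1 ≤ i → i ≤ d - 1 → i ≤ m → x.get ⟨m - i, by omega⟩ = .b) ∧
      (d ≤ m → x.get ⟨m - d, by omega⟩ = .b ∨ x.get ⟨m - d, by omega⟩ = .B))

/-- `cn d n k` is the number of `d`-legal words of weight `n` or `n+1` whose first `k`
letters avoid `A` and whose first `d` letters avoid `B`. -/
noncomputable def cn (d n k : ℕ) : ℕ :=
  Set.ncard {x : List Letter | dLegal d x ∧ (wtWord x = n ∨ wtWord x = n + 1) ∧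
    (∀ m, ∀ hm : m < x.length, m < k → x.get ⟨m, hm⟩ ≠ .A) ∧
    (∀ m, ∀ hm : m < x.length, m < d → x.get ⟨m, hm⟩ ≠ .B)}


namespace Stmt15

instance : Finite Letter := by
  have : Function.Surjective (fun n : Fin 4 => ([Letter.a, .b, .A, .B].get n)) := by
    intro c; cases c
    exacts [⟨0, rfl⟩, ⟨1, rfl⟩, ⟨2, rfl⟩, ⟨3, rfl⟩]
  exact Finite.of_surjective _ this

def Ok (d k : ℕ) (x : List Letter) : Prop :=
  dLegal d x ∧ (∀ m, ∀ hm : m < x.length, m < k → x.get ⟨m, hm⟩ ≠ .A) ∧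
    (∀ m, ∀ hm : m < x.length, m < d → x.get ⟨m, hm⟩ ≠ .B)

def S (d k n : ℕ) : Set (List Letter) := {x | Ok d k x ∧ wtWord x = n}

lemma two_le_wt (c : Letter) : 2 ≤ c.wt := by cases c <;> simp [Letter.wt]

lemma wt_le_three (c : Letter) : c.wt ≤ 3 := by cases c <;> simp [Letter.wt]

lemma wtWord_append (x y : List Letter) : wtWord (x ++ y) = wtWord x + wtWord y := by
  simp [wtWord]

lemma wtWord_cons (c : Letter) (x : List Letter) : wtWord (c :: x) = c.wt + wtWord x := by
  simp [wtWord]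

lemma length_le_wtWord (x : List Letter) : x.length ≤ wtWord x := by
  induction x with
  | nil => simp [wtWord]
  | cons c t ih => rw [wtWord_cons]; have := two_le_wt c; simp; omega

lemma finite_wt_le (n : ℕ) : {x : List Letter | wtWord x ≤ n}.Finite := by
  have h := List.finite_length_le Letter n
  exact h.subset (fun x hx => le_trans (length_le_wtWord x) hx)

lemma S_finite (d k n : ℕ) : (S d k n).Finite :=
  (finite_wt_le n).subset (fun x hx => by have := hx.2; simp only [Set.mem_setOf_eq]; omega)

lemma cnset_eq (d n k : ℕ) :
    {x : List Letter | dLegal d x ∧ (wtWord x = n ∨ wtWord x = n + 1) ∧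
      (∀ m, ∀ hm : m < x.length, m < k → x.get ⟨m, hm⟩ ≠ .A) ∧
      (∀ m, ∀ hm : m < x.length, m < d → x.get ⟨m, hm⟩ ≠ .B)} = S d k n ∪ S d k (n+1) := by
  ext x
  simp only [Set.mem_setOf_eq, Set.mem_union, S, Ok]
  tauto

lemma cn_eq_g (d n k : ℕ) : cn d n k = (S d k n).ncard + (S d k (n+1)).ncard := by
  rw [cn, cnset_eq]
  refine Set.ncard_union_eq ?_ (S_finite d k n) (S_finite d k (n+1))
  rw [Set.disjoint_left]
  rintro x ⟨_, h1⟩ ⟨_, h2⟩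
  omega


/-! ### Lower bound -/

def phi (m : ℕ) (f : Fin m → Bool) : List Letter :=
  List.ofFn (fun i => if f i then .a else .b)

lemma phi_get (m : ℕ) (f : Fin m → Bool) (j : ℕ) (hj : j < (phi m f).length) :
    (phi m f).get ⟨j, hj⟩ = .a ∨ (phi m f).get ⟨j, hj⟩ = .b := by
  simp only [phi, List.get_eq_getElem, List.getElem_ofFn]
  split <;> simp

lemma phi_mem (d k m : ℕ) (f : Fin m → Bool) :
    Ok d k (phi m f) ∧ wtWord (phi m f) = 2 * m := by
  constructor
  · refine ⟨?_, ?_, ?_⟩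
    · intro j hj
      rcases phi_get m f j hj with h | h <;>
        simp only [List.get_eq_getElem] at h ⊢ <;> rw [h] <;>
        exact ⟨fun hc => by simp_all, fun hc => by simp_all⟩
    · intro j hj _
      rcases phi_get m f j hj with h | h <;>
        simp only [List.get_eq_getElem] at h ⊢ <;> simp [h]
    · intro j hj _
      rcases phi_get m f j hj with h | h <;>
        simp only [List.get_eq_getElem] at h ⊢ <;> simp [h]
  · have hmem : ∀ y ∈ (phi m f).map Letter.wt, y = 2 := by
      intro y hy
      simp only [phi, List.mem_map] at hy
      obtain ⟨c, hc, rfl⟩ := hy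
      have : c = .a ∨ c = .b := by
        simp only [List.mem_ofFn] at hc
        obtain ⟨i, rfl⟩ := hc
        split <;> simp
      rcases this with rfl | rfl <;> rfl
    have hrep := List.eq_replicate_of_mem hmem
    have hlen : ((phi m f).map Letter.wt).length = m := by simp [phi]
    rw [wtWord, hrep, hlen, List.sum_replicate, smul_eq_mul]
    omega

lemma phi_inj (m : ℕ) : Function.Injective (phi m) := by
  intro f g h
  have h2 := List.ofFn_injective h
  funext i
  have := congrFun h2 i
  rcases hf : f i with _ | _ <;> rcases hg : g i with _ | _ <;> simp_all

lemma lower_bound (d n k : ℕ) : 2 ^ ((n + 1) / 2) ≤ cn d n k := by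
  set m := (n + 1) / 2 with hm
  have himg : phi m '' Set.univ ⊆ S d k n ∪ S d k (n+1) := by
    rintro x ⟨f, _, rfl⟩
    have hp := phi_mem d k m f
    rcases Nat.even_or_odd n with ⟨t, rfl⟩ | ⟨t, rfl⟩
    · left; exact ⟨hp.1, by omega⟩
    · right; exact ⟨hp.1, by omega⟩
  have hfin : (S d k n ∪ S d k (n+1)).Finite := (S_finite d k n).union (S_finite d k (n+1))
  have h1 : (phi m '' Set.univ).ncard = 2 ^ m := by
    rw [Set.ncard_image_of_injective _ (phi_inj m), Set.ncard_univ, Nat.card_fun]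
    simp
  calc 2 ^ m = (phi m '' Set.univ).ncard := h1.symm
    _ ≤ (S d k n ∪ S d k (n+1)).ncard := Set.ncard_le_ncard himg hfin
    _ = cn d n k := by rw [cn, cnset_eq]


/-! ### Structural lemmas -/

/-- getElem version of dLegal -/
lemma dLegal_iff (d : ℕ) (x : List Letter) : dLegal d x ↔
    ∀ m : ℕ, ∀ hm : m < x.length,
    (x[m] = Letter.A →
      (∀ i, 1 ≤ i → i ≤ d - 1 → i ≤ m → x[m - i]'(by omega) = Letter.a) ∧
      (d ≤ m → x[m - d]'(by omega) = Letter.a ∨ x[m - d]'(by omega) = Letter.A)) ∧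
    (x[m] = Letter.B →
      (∀ i, 1 ≤ i → i ≤ d - 1 → i ≤ m → x[m - i]'(by omega) = Letter.b) ∧
      (d ≤ m → x[m - d]'(by omega) = Letter.b ∨ x[m - d]'(by omega) = Letter.B)) := by
  simp only [dLegal, List.get_eq_getElem]

/-- getElem version of Ok -/
lemma Ok_iff (d k : ℕ) (x : List Letter) : Ok d k x ↔
    (∀ m : ℕ, ∀ hm : m < x.length,
    (x[m] = Letter.A →
      (∀ i, 1 ≤ i → i ≤ d - 1 → i ≤ m → x[m - i]'(by omega) = Letter.a) ∧
      (d ≤ m → x[m - d]'(by omega) = Letter.a ∨ x[m - d]'(by omega) = Letter.A)) ∧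
    (x[m] = Letter.B →
      (∀ i, 1 ≤ i → i ≤ d - 1 → i ≤ m → x[m - i]'(by omega) = Letter.b) ∧
      (d ≤ m → x[m - d]'(by omega) = Letter.b ∨ x[m - d]'(by omega) = Letter.B))) ∧
    (∀ m, ∀ hm : m < x.length, m < k → x[m] ≠ Letter.A) ∧
    (∀ m, ∀ hm : m < x.length, m < d → x[m] ≠ Letter.B) := by
  simp only [Ok, dLegal, List.get_eq_getElem]

lemma Ok_append_left {d k : ℕ} {x y : List Letter} (h : Ok d k (x ++ y)) : Ok d k x := by
  rw [Ok_iff] at h ⊢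
  obtain ⟨hleg, hA, hB⟩ := h
  have hget : ∀ j : ℕ, ∀ hj : j < x.length, ∀ hj' : j < (x ++ y).length,
      (x ++ y)[j] = x[j] := fun j hj hj' => List.getElem_append_left hj
  have hlen : ∀ j : ℕ, j < x.length → j < (x ++ y).length := by simp; omega
  refine ⟨?_, ?_, ?_⟩
  · intro m hm
    have H := hleg m (hlen m hm)
    rw [hget m hm] at H
    constructor
    · intro hAm
      obtain ⟨h1, h2⟩ := H.1 hAm
      refine ⟨fun i hi1 hi2 hi3 => ?_, fun hdm => ?_⟩
      · rw [← hget (m - i) (by omega) (hlen _ (by omega))]; exact h1 i hi1 hi2 hi3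
      · rw [← hget (m - d) (by omega) (hlen _ (by omega))]; exact h2 hdm
    · intro hBm
      obtain ⟨h1, h2⟩ := H.2 hBm
      refine ⟨fun i hi1 hi2 hi3 => ?_, fun hdm => ?_⟩
      · rw [← hget (m - i) (by omega) (hlen _ (by omega))]; exact h1 i hi1 hi2 hi3
      · rw [← hget (m - d) (by omega) (hlen _ (by omega))]; exact h2 hdm
  · intro m hm hmk
    rw [← hget m hm (hlen m hm)]; exact hA m (hlen m hm) hmk
  · intro m hm hmd
    rw [← hget m hm (hlen m hm)]; exact hB m (hlen m hm) hmd

lemma Ok_concat_ab {d k : ℕ} {x : List Letter} {c : Letter} (hc : c = .a ∨ c = .b)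
    (h : Ok d k x) : Ok d k (x ++ [c]) := by
  rw [Ok_iff] at h ⊢
  obtain ⟨hleg, hA, hB⟩ := h
  have hlen : (x ++ [c]).length = x.length + 1 := by simp
  have hget : ∀ j : ℕ, ∀ hj : j < x.length, ∀ hj' : j < (x ++ [c]).length,
      (x ++ [c])[j] = x[j] := fun j hj hj' => List.getElem_append_left hj
  have hgetc : ∀ hj' : x.length < (x ++ [c]).length, (x ++ [c])[x.length] = c := by
    intro hj'
    rw [List.getElem_append_right (le_refl _)]
    simp
  refine ⟨?_, ?_, ?_⟩
  · intro m hm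
    by_cases hmx : m < x.length
    · have H := hleg m hmx
      rw [hget m hmx]
      constructor
      · intro hAm
        obtain ⟨h1, h2⟩ := H.1 hAm
        refine ⟨fun i hi1 hi2 hi3 => ?_, fun hdm => ?_⟩
        · rw [hget (m - i) (by omega)]; exact h1 i hi1 hi2 hi3
        · rw [hget (m - d) (by omega)]; exact h2 hdm
      · intro hBm
        obtain ⟨h1, h2⟩ := H.2 hBm
        refine ⟨fun i hi1 hi2 hi3 => ?_, fun hdm => ?_⟩
        · rw [hget (m - i) (by omega)]; exact h1 i hi1 hi2 hi3
        · rw [hget (m - d) (by omega)]; exact h2 hdm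
    · have hmeq : m = x.length := by rw [hlen] at hm; omega
      subst hmeq
      rw [hgetc hm]
      rcases hc with rfl | rfl
      · exact ⟨fun h => by simp at h, fun h => by simp at h⟩
      · exact ⟨fun h => by simp at h, fun h => by simp at h⟩
  · intro m hm hmk
    by_cases hmx : m < x.length
    · rw [hget m hmx]; exact hA m hmx hmk
    · have hmeq : m = x.length := by rw [hlen] at hm; omega
      subst hmeq
      rw [hgetc hm]
      rcases hc with rfl | rfl <;> simp
  · intro m hm hmd
    by_cases hmx : m < x.length
    · rw [hget m hmx]; exact hB m hmx hmd
    · have hmeq : m = x.length := by rw [hlen] at hm; omega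
      subst hmeq
      rw [hgetc hm]
      rcases hc with rfl | rfl <;> simp

/-! ### Blocks -/

def blockA (d : ℕ) : List Letter := List.replicate (d-1) Letter.a ++ [Letter.A]
def blockB (d : ℕ) : List Letter := List.replicate (d-1) Letter.b ++ [Letter.B]

lemma length_blockA (d : ℕ) (hd : 1 ≤ d) : (blockA d).length = d := by
  simp [blockA]; omega
lemma length_blockB (d : ℕ) (hd : 1 ≤ d) : (blockB d).length = d := by
  simp [blockB]; omega

lemma wt_blockA (d : ℕ) (hd : 1 ≤ d) : wtWord (blockA d) = 2*d + 1 := by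
  have : (List.replicate (d-1) Letter.a).map Letter.wt = List.replicate (d-1) 2 := by
    rw [List.map_replicate]; rfl
  simp [blockA, wtWord, this, List.sum_replicate, Letter.wt]
  omega
lemma wt_blockB (d : ℕ) (hd : 1 ≤ d) : wtWord (blockB d) = 2*d + 1 := by
  have : (List.replicate (d-1) Letter.b).map Letter.wt = List.replicate (d-1) 2 := by
    rw [List.map_replicate]; rfl
  simp [blockB, wtWord, this, List.sum_replicate, Letter.wt]
  omega

lemma blockA_get (d : ℕ) (hd : 1 ≤ d) (j : ℕ) (hj : j < (blockA d).length) :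
    (blockA d)[j] = if j = d - 1 then Letter.A else Letter.a := by
  rw [length_blockA d hd] at hj
  by_cases h : j < d - 1
  · simp only [blockA]
    rw [List.getElem_append_left (by simp; omega), List.getElem_replicate]
    simp [Nat.ne_of_lt h]
  · have hj' : j = d - 1 := by omega
    subst hj'
    simp only [blockA]
    rw [List.getElem_append_right (by simp)]
    simp
lemma blockB_get (d : ℕ) (hd : 1 ≤ d) (j : ℕ) (hj : j < (blockB d).length) :
    (blockB d)[j] = if j = d - 1 then Letter.B else Letter.b := by
  rw [length_blockB d hd] at hj
  by_cases h : j < d - 1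
  · simp only [blockB]
    rw [List.getElem_append_left (by simp; omega), List.getElem_replicate]
    simp [Nat.ne_of_lt h]
  · have hj' : j = d - 1 := by omega
    subst hj'
    simp only [blockB]
    rw [List.getElem_append_right (by simp)]
    simp

lemma get_idx {x : List Letter} {i j : ℕ} (h : i = j) {hi : i < x.length}
    {hj : j < x.length} : x[i]'hi = x[j]'hj := by subst h; rfl

lemma Ok_concat_blockA {d k : ℕ} (hd : 1 ≤ d) (hk : k ≤ d - 1) {x : List Letter}
    (hne : x ≠ []) (hok : Ok d k x)
    (hlast : x.getLast hne = .a ∨ x.getLast hne = .A) :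
    Ok d k (x ++ blockA d) := by
  rw [Ok_iff] at hok ⊢
  obtain ⟨hleg, hA, hB⟩ := hok
  have hL : 1 ≤ x.length := List.length_pos_iff.mpr hne
  have hlen : (x ++ blockA d).length = x.length + d := by simp [length_blockA d hd]
  have hget : ∀ j : ℕ, ∀ hj : j < x.length, ∀ hj' : j < (x ++ blockA d).length,
      (x ++ blockA d)[j] = x[j] := fun j hj _ => List.getElem_append_left hj
  have hgetb : ∀ j : ℕ, x.length ≤ j → ∀ hj' : j < (x ++ blockA d).length,
      (x ++ blockA d)[j] = if j = x.length + d - 1 then Letter.A else Letter.a := by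
    intro j hj hj'
    rw [List.getElem_append_right hj, blockA_get d hd]
    have : j - x.length = d - 1 ↔ j = x.length + d - 1 := by omega
    by_cases hc : j = x.length + d - 1
    · rw [if_pos (this.mpr hc), if_pos hc]
    · rw [if_neg (fun hh => hc (this.mp hh)), if_neg hc]
  have hlast' : x[x.length - 1]'(by omega) = .a ∨ x[x.length - 1]'(by omega) = .A := by
    rwa [List.getLast_eq_getElem] at hlast
  refine ⟨?_, ?_, ?_⟩
  · intro m hm
    rw [hlen] at hm
    by_cases hmx : m < x.length
    · have H := hleg m hmx
      rw [hget m hmx]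
      constructor
      · intro hAm
        obtain ⟨h1, h2⟩ := H.1 hAm
        refine ⟨fun i hi1 hi2 hi3 => ?_, fun hdm => ?_⟩
        · rw [hget (m - i) (by omega)]; exact h1 i hi1 hi2 hi3
        · rw [hget (m - d) (by omega)]; exact h2 hdm
      · intro hBm
        obtain ⟨h1, h2⟩ := H.2 hBm
        refine ⟨fun i hi1 hi2 hi3 => ?_, fun hdm => ?_⟩
        · rw [hget (m - i) (by omega)]; exact h1 i hi1 hi2 hi3
        · rw [hget (m - d) (by omega)]; exact h2 hdm
    · rw [hgetb m (by omega)]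
      by_cases hm1 : m = x.length + d - 1
      · rw [if_pos hm1]
        constructor
        · intro _
          refine ⟨fun i hi1 hi2 hi3 => ?_, fun hdm => ?_⟩
          · rw [hgetb (m - i) (by omega), if_neg (by omega)]
          · rw [hget (m - d) (by omega), get_idx (show m - d = x.length - 1 by omega)]
            exact hlast'
        · intro h; exact absurd h (by decide)
      · rw [if_neg hm1]
        exact ⟨fun h => absurd h (by decide), fun h => absurd h (by decide)⟩
  · intro m hm hmk
    rw [hlen] at hm
    by_cases hmx : m < x.length
    · rw [hget m hmx]; exact hA m hmx hmk
    · rw [hgetb m (by omega), if_neg (by omega)]; decide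
  · intro m hm hmd
    rw [hlen] at hm
    by_cases hmx : m < x.length
    · rw [hget m hmx]; exact hB m hmx hmd
    · rw [hgetb m (by omega), if_neg (by omega)]; decide

lemma Ok_concat_blockB {d k : ℕ} (hd : 1 ≤ d) (hk : k ≤ d - 1) {x : List Letter}
    (hne : x ≠ []) (hok : Ok d k x)
    (hlast : x.getLast hne = .b ∨ x.getLast hne = .B) :
    Ok d k (x ++ blockB d) := by
  rw [Ok_iff] at hok ⊢
  obtain ⟨hleg, hA, hB⟩ := hok
  have hL : 1 ≤ x.length := List.length_pos_iff.mpr hne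
  have hlen : (x ++ blockB d).length = x.length + d := by simp [length_blockB d hd]
  have hget : ∀ j : ℕ, ∀ hj : j < x.length, ∀ hj' : j < (x ++ blockB d).length,
      (x ++ blockB d)[j] = x[j] := fun j hj _ => List.getElem_append_left hj
  have hgetb : ∀ j : ℕ, x.length ≤ j → ∀ hj' : j < (x ++ blockB d).length,
      (x ++ blockB d)[j] = if j = x.length + d - 1 then Letter.B else Letter.b := by
    intro j hj hj'
    rw [List.getElem_append_right hj, blockB_get d hd]
    have : j - x.length = d - 1 ↔ j = x.length + d - 1 := by omega
    by_cases hc : j = x.length + d - 1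
    · rw [if_pos (this.mpr hc), if_pos hc]
    · rw [if_neg (fun hh => hc (this.mp hh)), if_neg hc]
  have hlast' : x[x.length - 1]'(by omega) = .b ∨ x[x.length - 1]'(by omega) = .B := by
    rwa [List.getLast_eq_getElem] at hlast
  refine ⟨?_, ?_, ?_⟩
  · intro m hm
    rw [hlen] at hm
    by_cases hmx : m < x.length
    · have H := hleg m hmx
      rw [hget m hmx]
      constructor
      · intro hAm
        obtain ⟨h1, h2⟩ := H.1 hAm
        refine ⟨fun i hi1 hi2 hi3 => ?_, fun hdm => ?_⟩
        · rw [hget (m - i) (by omega)]; exact h1 i hi1 hi2 hi3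
        · rw [hget (m - d) (by omega)]; exact h2 hdm
      · intro hBm
        obtain ⟨h1, h2⟩ := H.2 hBm
        refine ⟨fun i hi1 hi2 hi3 => ?_, fun hdm => ?_⟩
        · rw [hget (m - i) (by omega)]; exact h1 i hi1 hi2 hi3
        · rw [hget (m - d) (by omega)]; exact h2 hdm
    · rw [hgetb m (by omega)]
      by_cases hm1 : m = x.length + d - 1
      · rw [if_pos hm1]
        constructor
        · intro h; exact absurd h (by decide)
        · intro _
          refine ⟨fun i hi1 hi2 hi3 => ?_, fun hdm => ?_⟩
          · rw [hgetb (m - i) (by omega), if_neg (by omega)]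
          · rw [hget (m - d) (by omega), get_idx (show m - d = x.length - 1 by omega)]
            exact hlast'
      · rw [if_neg hm1]
        exact ⟨fun h => absurd h (by decide), fun h => absurd h (by decide)⟩
  · intro m hm hmk
    rw [hlen] at hm
    by_cases hmx : m < x.length
    · rw [hget m hmx]; exact hA m hmx hmk
    · rw [hgetb m (by omega), if_neg (by omega)]; decide
  · intro m hm hmd
    rw [hlen] at hm
    by_cases hmx : m < x.length
    · rw [hget m hmx]; exact hB m hmx hmd
    · rw [hgetb m (by omega), if_neg (by omega)]; decide

lemma wt_repA (m : ℕ) : wtWord (List.replicate m Letter.a ++ [Letter.A]) = 2*m + 3 := by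
  have : (List.replicate m Letter.a).map Letter.wt = List.replicate m 2 := by
    rw [List.map_replicate]; rfl
  simp [wtWord, this, List.sum_replicate, Letter.wt]
  omega

lemma structure_A {d k : ℕ} (hd : 1 ≤ d) {x : List Letter} (hok : Ok d k x) (hne : x ≠ [])
    (hlast : x.getLast hne = .A) (hwt : 2*d + 2 ≤ wtWord x) :
    ∃ (y : List Letter) (hy : y ≠ []),
      x = y ++ blockA d ∧ (y.getLast hy = .a ∨ y.getLast hy = .A) := by
  obtain ⟨hleg, hA, hB⟩ := Ok_iff d k x |>.mp hok
  have hL : 1 ≤ x.length := List.length_pos_iff.mpr hne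
  have hxm : x[x.length - 1]'(by omega) = .A := by
    rwa [List.getLast_eq_getElem] at hlast
  obtain ⟨h1, h2⟩ := (hleg (x.length - 1) (by omega)).1 hxm
  have hlen : d + 1 ≤ x.length := by
    by_contra hcon
    push_neg at hcon
    have hall : ∀ j : ℕ, ∀ hj : j < x.length - 1, x[j]'(by omega) = .a := by
      intro j hj
      have := h1 (x.length - 1 - j) (by omega) (by omega) (by omega)
      rwa [get_idx (show x.length - 1 - (x.length - 1 - j) = j by omega)] at this
    have hxe : x = List.replicate (x.length - 1) Letter.a ++ [Letter.A] := by
      apply List.ext_getElem (by simp; omega)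
      intro j hj1 hj2
      by_cases hj : j < x.length - 1
      · rw [List.getElem_append_left (by simp; omega), List.getElem_replicate]
        exact hall j hj
      · have : j = x.length - 1 := by omega
        subst this
        rw [List.getElem_append_right (by simp), hxm]
        simp
    rw [hxe, wt_repA] at hwt
    omega
  refine ⟨x.take (x.length - d), ?_, ?_, ?_⟩
  · have htl : (x.take (x.length - d)).length = x.length - d := by
      simp only [List.length_take]; omega
    intro hcon
    rw [hcon] at htl
    simp at htl
    omega
  · apply List.ext_getElem (by simp [length_blockA d hd]; omega)
    intro j hj1 hj2
    by_cases hj : j < x.length - d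
    · rw [List.getElem_append_left (by simp only [List.length_take]; omega),
        List.getElem_take]
    · rw [List.getElem_append_right (by simp only [List.length_take]; omega),
        blockA_get d hd]
      simp only [List.length_take]
      by_cases hj1' : j = x.length - 1
      · rw [if_pos (by omega)]
        rw [← hxm]
        exact get_idx hj1'
      · rw [if_neg (by omega)]
        have := h1 (x.length - 1 - j) (by omega) (by omega) (by omega)
        rwa [get_idx (show x.length - 1 - (x.length - 1 - j) = j by omega)] at this
  · have htl : (x.take (x.length - d)).length = x.length - d := by
      simp only [List.length_take]; omega
    have hyne : x.take (x.length - d) ≠ [] := by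
      intro hcon; rw [hcon] at htl; simp at htl; omega
    rw [List.getLast_eq_getElem _, List.getElem_take]
    rcases h2 (by omega) with h | h
    · left
      exact (get_idx (show (x.take (x.length - d)).length - 1 = x.length - 1 - d by
        simp only [List.length_take]; omega)).trans h
    · right
      exact (get_idx (show (x.take (x.length - d)).length - 1 = x.length - 1 - d by
        simp only [List.length_take]; omega)).trans h

lemma structure_B {d k : ℕ} (hd : 1 ≤ d) {x : List Letter} (hok : Ok d k x) (hne : x ≠ [])
    (hlast : x.getLast hne = .B) :
    ∃ (y : List Letter) (hy : y ≠ []),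
      x = y ++ blockB d ∧ (y.getLast hy = .b ∨ y.getLast hy = .B) := by
  obtain ⟨hleg, hA, hB⟩ := Ok_iff d k x |>.mp hok
  have hL : 1 ≤ x.length := List.length_pos_iff.mpr hne
  have hxm : x[x.length - 1]'(by omega) = .B := by
    rwa [List.getLast_eq_getElem] at hlast
  obtain ⟨h1, h2⟩ := (hleg (x.length - 1) (by omega)).2 hxm
  have hlen : d + 1 ≤ x.length := by
    by_contra hcon
    push_neg at hcon
    exact hB (x.length - 1) (by omega) (by omega) hxm
  refine ⟨x.take (x.length - d), ?_, ?_, ?_⟩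
  · have htl : (x.take (x.length - d)).length = x.length - d := by
      simp only [List.length_take]; omega
    intro hcon
    rw [hcon] at htl
    simp at htl
    omega
  · apply List.ext_getElem (by simp [length_blockB d hd]; omega)
    intro j hj1 hj2
    by_cases hj : j < x.length - d
    · rw [List.getElem_append_left (by simp only [List.length_take]; omega),
        List.getElem_take]
    · rw [List.getElem_append_right (by simp only [List.length_take]; omega),
        blockB_get d hd]
      simp only [List.length_take]
      by_cases hj1' : j = x.length - 1
      · rw [if_pos (by omega)]
        rw [← hxm]
        exact get_idx hj1'
      · rw [if_neg (by omega)]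
        have := h1 (x.length - 1 - j) (by omega) (by omega) (by omega)
        rwa [get_idx (show x.length - 1 - (x.length - 1 - j) = j by omega)] at this
  · have htl : (x.take (x.length - d)).length = x.length - d := by
      simp only [List.length_take]; omega
    have hyne : x.take (x.length - d) ≠ [] := by
      intro hcon; rw [hcon] at htl; simp at htl; omega
    rw [List.getLast_eq_getElem _, List.getElem_take]
    rcases h2 (by omega) with h | h
    · left
      exact (get_idx (show (x.take (x.length - d)).length - 1 = x.length - 1 - d by
        simp only [List.length_take]; omega)).trans h
    · right
      exact (get_idx (show (x.take (x.length - d)).length - 1 = x.length - 1 - d by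
        simp only [List.length_take]; omega)).trans h

/-! ### Counting -/

def C (d k n : ℕ) (c : Letter) : Set (List Letter) := {x ∈ S d k n | x.getLast? = some c}

noncomputable def g (d k n : ℕ) : ℕ := (S d k n).ncard

lemma C_subset (d k n : ℕ) (c : Letter) : C d k n c ⊆ S d k n := fun _ h => h.1

lemma C_finite (d k n : ℕ) (c : Letter) : (C d k n c).Finite :=
  (S_finite d k n).subset (C_subset d k n c)

lemma mem_S_ne_nil {d k n : ℕ} {x : List Letter} (hx : x ∈ S d k n) (hn : 1 ≤ n) :
    x ≠ [] := by
  rintro rfl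
  have := hx.2
  simp [wtWord] at this
  omega

lemma wt_singleton (c : Letter) : wtWord [c] = c.wt := by simp [wtWord]

lemma C_ab_eq (d k n : ℕ) (c : Letter) (hc : c = .a ∨ c = .b) :
    C d k (n + 2) c = (fun y => y ++ [c]) '' S d k n := by
  have hwtc : c.wt = 2 := by rcases hc with rfl | rfl <;> rfl
  ext x
  constructor
  · rintro ⟨⟨hok, hwt⟩, hq⟩
    have hne : x ≠ [] := by rintro rfl; simp at hq
    have hgl : x.getLast hne = c := by
      rw [List.getLast?_eq_getLast hne] at hq
      exact Option.some_injective _ hq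
    have hx : x.dropLast ++ [c] = x := by
      conv_rhs => rw [← List.dropLast_concat_getLast hne]
      rw [hgl]
    refine ⟨x.dropLast, ⟨?_, ?_⟩, hx⟩
    · exact Ok_append_left (x := x.dropLast) (y := [c]) (by rwa [hx])
    · have : wtWord x = wtWord x.dropLast + 2 := by
        conv_lhs => rw [← hx]
        rw [wtWord_append, wt_singleton, hwtc]
      omega
  · rintro ⟨y, ⟨hok, hwt⟩, rfl⟩
    refine ⟨⟨Ok_concat_ab hc hok, ?_⟩, List.getLast?_concat⟩
    rw [wtWord_append, wt_singleton, hwtc, hwt]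

lemma CA_eq (d k n : ℕ) (hd : 1 ≤ d) (hk : k ≤ d - 1) :
    C d k (n + 2 + (2*d + 1)) .A = (fun y => y ++ blockA d) ''
      {x ∈ S d k (n + 2) | x.getLast? = some .a ∨ x.getLast? = some .A} := by
  ext x
  constructor
  · rintro ⟨⟨hok, hwt⟩, hq⟩
    have hne : x ≠ [] := by rintro rfl; simp at hq
    have hgl : x.getLast hne = .A := by
      rw [List.getLast?_eq_getLast hne] at hq
      exact Option.some_injective _ hq
    obtain ⟨y, hy, hdec, hylast⟩ := structure_A hd hok hne hgl (by omega)
    have hoky : Ok d k y := Ok_append_left (y := blockA d) (by rwa [hdec] at hok)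
    have hwty : wtWord y = n + 2 := by
      rw [hdec, wtWord_append, wt_blockA d hd] at hwt
      omega
    refine ⟨y, ⟨⟨hoky, hwty⟩, ?_⟩, hdec.symm⟩
    rw [List.getLast?_eq_getLast hy]
    rcases hylast with h | h
    · left; rw [h]
    · right; rw [h]
  · rintro ⟨y, ⟨⟨hok, hwt⟩, hyl⟩, rfl⟩
    have hy : y ≠ [] := by rintro rfl; simp at hyl
    have hylast : y.getLast hy = .a ∨ y.getLast hy = .A := by
      rw [List.getLast?_eq_getLast hy] at hyl
      rcases hyl with h | h
      · left; exact Option.some_injective _ h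
      · right; exact Option.some_injective _ h
    refine ⟨⟨Ok_concat_blockA hd hk hy hok hylast, ?_⟩, ?_⟩
    · rw [wtWord_append, wt_blockA d hd, hwt]
    · show (y ++ (List.replicate (d-1) Letter.a ++ [Letter.A])).getLast? = some Letter.A
      rw [← List.append_assoc]
      exact List.getLast?_concat

lemma CB_eq (d k n : ℕ) (hd : 1 ≤ d) (hk : k ≤ d - 1) :
    C d k (n + 2 + (2*d + 1)) .B = (fun y => y ++ blockB d) ''
      {x ∈ S d k (n + 2) | x.getLast? = some .b ∨ x.getLast? = some .B} := by
  ext x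
  constructor
  · rintro ⟨⟨hok, hwt⟩, hq⟩
    have hne : x ≠ [] := by rintro rfl; simp at hq
    have hgl : x.getLast hne = .B := by
      rw [List.getLast?_eq_getLast hne] at hq
      exact Option.some_injective _ hq
    obtain ⟨y, hy, hdec, hylast⟩ := structure_B hd hok hne hgl
    have hoky : Ok d k y := Ok_append_left (y := blockB d) (by rwa [hdec] at hok)
    have hwty : wtWord y = n + 2 := by
      rw [hdec, wtWord_append, wt_blockB d hd] at hwt
      omega
    refine ⟨y, ⟨⟨hoky, hwty⟩, ?_⟩, hdec.symm⟩
    rw [List.getLast?_eq_getLast hy]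
    rcases hylast with h | h
    · left; rw [h]
    · right; rw [h]
  · rintro ⟨y, ⟨⟨hok, hwt⟩, hyl⟩, rfl⟩
    have hy : y ≠ [] := by rintro rfl; simp at hyl
    have hylast : y.getLast hy = .b ∨ y.getLast hy = .B := by
      rw [List.getLast?_eq_getLast hy] at hyl
      rcases hyl with h | h
      · left; exact Option.some_injective _ h
      · right; exact Option.some_injective _ h
    refine ⟨⟨Ok_concat_blockB hd hk hy hok hylast, ?_⟩, ?_⟩
    · rw [wtWord_append, wt_blockB d hd, hwt]
    · show (y ++ (List.replicate (d-1) Letter.b ++ [Letter.B])).getLast? = some Letter.B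
      rw [← List.append_assoc]
      exact List.getLast?_concat

lemma C_disj (d k n : ℕ) {c c' : Letter} (h : c ≠ c') :
    Disjoint (C d k n c) (C d k n c') := by
  rw [Set.disjoint_left]
  rintro x ⟨_, h1⟩ ⟨_, h2⟩
  rw [h1] at h2
  exact h (Option.some_injective _ h2)

lemma S_classes (d k n : ℕ) (hn : 1 ≤ n) :
    S d k n = (C d k n .a ∪ C d k n .b) ∪ (C d k n .A ∪ C d k n .B) := by
  ext x
  constructor
  · intro hx
    have hne := mem_S_ne_nil hx hn
    have hq := List.getLast?_eq_getLast hne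
    cases hc : x.getLast hne with
    | a => exact Or.inl (Or.inl ⟨hx, by rw [hq, hc]⟩)
    | b => exact Or.inl (Or.inr ⟨hx, by rw [hq, hc]⟩)
    | A => exact Or.inr (Or.inl ⟨hx, by rw [hq, hc]⟩)
    | B => exact Or.inr (Or.inr ⟨hx, by rw [hq, hc]⟩)
  · rintro ((h | h) | (h | h)) <;> exact h.1

lemma g_split (d k n : ℕ) (hn : 1 ≤ n) :
    g d k n = ((C d k n .a).ncard + (C d k n .b).ncard) +
      ((C d k n .A).ncard + (C d k n .B).ncard) := by
  rw [g, S_classes d k n hn]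
  rw [Set.ncard_union_eq ?_ (((C_finite d k n .a).union (C_finite d k n .b)))
      (((C_finite d k n .A).union (C_finite d k n .B))),
    Set.ncard_union_eq (C_disj d k n (by decide)) (C_finite d k n .a) (C_finite d k n .b),
    Set.ncard_union_eq (C_disj d k n (by decide)) (C_finite d k n .A) (C_finite d k n .B)]
  refine Disjoint.union_left ?_ ?_ <;> refine Disjoint.union_right ?_ ?_ <;>
    exact C_disj d k n (by decide)

lemma Ea_eq (d k n : ℕ) :
    {x ∈ S d k n | x.getLast? = some .a ∨ x.getLast? = some .A} =
      C d k n .a ∪ C d k n .A := by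
  ext x
  constructor
  · rintro ⟨hS, h | h⟩
    · exact Or.inl ⟨hS, h⟩
    · exact Or.inr ⟨hS, h⟩
  · rintro (⟨hS, h⟩ | ⟨hS, h⟩)
    · exact ⟨hS, Or.inl h⟩
    · exact ⟨hS, Or.inr h⟩

lemma Eb_eq (d k n : ℕ) :
    {x ∈ S d k n | x.getLast? = some .b ∨ x.getLast? = some .B} =
      C d k n .b ∪ C d k n .B := by
  ext x
  constructor
  · rintro ⟨hS, h | h⟩
    · exact Or.inl ⟨hS, h⟩
    · exact Or.inr ⟨hS, h⟩
  · rintro (⟨hS, h⟩ | ⟨hS, h⟩)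
    · exact ⟨hS, Or.inl h⟩
    · exact ⟨hS, Or.inr h⟩

lemma g_rec (d k : ℕ) (hd : 1 ≤ d) (hk : k ≤ d - 1) (n : ℕ) :
    g d k (n + 2*d + 3) = 2 * g d k (n + 2*d + 1) + g d k (n + 2) := by
  have ha : (C d k (n + 2*d + 3) .a).ncard = g d k (n + 2*d + 1) := by
    rw [show n + 2*d + 3 = (n + 2*d + 1) + 2 by omega,
      C_ab_eq d k (n + 2*d + 1) .a (Or.inl rfl),
      Set.ncard_image_of_injective _ (List.append_left_injective _)]
    rfl
  have hb : (C d k (n + 2*d + 3) .b).ncard = g d k (n + 2*d + 1) := by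
    rw [show n + 2*d + 3 = (n + 2*d + 1) + 2 by omega,
      C_ab_eq d k (n + 2*d + 1) .b (Or.inr rfl),
      Set.ncard_image_of_injective _ (List.append_left_injective _)]
    rfl
  have hA : (C d k (n + 2*d + 3) .A).ncard =
      (C d k (n+2) .a).ncard + (C d k (n+2) .A).ncard := by
    rw [show n + 2*d + 3 = n + 2 + (2*d + 1) by omega, CA_eq d k n hd hk,
      Set.ncard_image_of_injective _ (List.append_left_injective _), Ea_eq,
      Set.ncard_union_eq (C_disj d k (n+2) (by decide)) (C_finite d k (n+2) .a)
        (C_finite d k (n+2) .A)]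
  have hB : (C d k (n + 2*d + 3) .B).ncard =
      (C d k (n+2) .b).ncard + (C d k (n+2) .B).ncard := by
    rw [show n + 2*d + 3 = n + 2 + (2*d + 1) by omega, CB_eq d k n hd hk,
      Set.ncard_image_of_injective _ (List.append_left_injective _), Eb_eq,
      Set.ncard_union_eq (C_disj d k (n+2) (by decide)) (C_finite d k (n+2) .b)
        (C_finite d k (n+2) .B)]
  have h1 := g_split d k (n + 2*d + 3) (by omega)
  have h2 := g_split d k (n + 2) (by omega)
  omega

lemma cn_rec (d k : ℕ) (hd : 1 ≤ d) (hk : k ≤ d - 1) (n : ℕ) :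
    cn d (n + 2*d + 3) k = 2 * cn d (n + 2*d + 1) k + cn d (n + 2) k := by
  have e1 := cn_eq_g d (n + 2*d + 3) k
  have e2 := cn_eq_g d (n + 2*d + 1) k
  have e3 := cn_eq_g d (n + 2) k
  have r1 := g_rec d k hd hk n
  have r2 := g_rec d k hd hk (n + 1)
  have e4 : n + 1 + 2*d + 3 = n + 2*d + 3 + 1 := by omega
  have e5 : n + 1 + 2*d + 1 = n + 2*d + 1 + 1 := by omega
  have e6 : n + 1 + 2 = n + 2 + 1 := by omega
  rw [e4, e5, e6] at r2
  simp only [g] at r1 r2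
  omega

lemma cn_pos (d n k : ℕ) : 0 < cn d n k :=
  lt_of_lt_of_le (Nat.pow_pos (by norm_num)) (lower_bound d n k)

open Filter in
lemma converge_aux (s : ℕ) (hs : 3 ≤ s) (hodd : s % 2 = 1) (p q : ℝ) (hp : 0 < p)
    (hq : 0 < q) (hpq : p + q = 1) (h : ℕ → ℝ) (hpos : ∀ n, 0 < h n)
    (hrec : ∀ n, h (n + s + 2) = p * h (n + s) + q * h (n + 2)) :
    ∃ r : ℝ, 0 < r ∧ Tendsto h atTop (nhds r) := by
  have hp1 : p ≤ 1 := by linarith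
  have hq1 : q ≤ 1 := by linarith
  have hne : (Finset.range s).Nonempty := Finset.nonempty_range_iff.mpr (by omega)
  set M : ℕ → ℝ := fun n => (Finset.range s).sup' hne (fun t => h (n + t)) with hM
  set μ : ℕ → ℝ := fun n => (Finset.range s).inf' hne (fun t => h (n + t)) with hμ
  have F1 : ∀ n t, t < s → h (n + t) ≤ M n := by
    intro n t ht
    rw [hM]
    exact Finset.le_sup' (fun t => h (n + t)) (Finset.mem_range.mpr ht)
  have F1' : ∀ n t, t < s → μ n ≤ h (n + t) := by
    intro n t ht
    rw [hμ]
    exact Finset.inf'_le (fun t => h (n + t)) (Finset.mem_range.mpr ht)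
  have F2 : ∀ n, μ n ≤ M n := fun n => le_trans (F1' n 0 (by omega)) (F1 n 0 (by omega))
  have F3 : ∀ n, 0 < μ n := by
    intro n
    obtain ⟨t, _, ht⟩ := Finset.exists_mem_eq_inf' hne (fun t => h (n + t))
    show 0 < (Finset.range s).inf' hne fun t => h (n + t)
    rw [ht]; exact hpos _
  -- rec in subtracted form
  have hrec' : ∀ i, s + 2 ≤ i → h i = p * h (i - 2) + q * h (i - s) := by
    intro i hi
    have := hrec (i - s - 2)
    rw [show i - s - 2 + s + 2 = i by omega, show i - s - 2 + s = i - 2 by omega,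
      show i - s - 2 + 2 = i - s by omega] at this
    exact this
  have F4 : ∀ i n, 2 ≤ n → n ≤ i → h i ≤ M n := by
    intro i
    induction i using Nat.strong_induction_on with
    | _ i ih =>
      intro n h2 hni
      by_cases hi : i < n + s
      · have : i = n + (i - n) := by omega
        rw [this]; exact F1 n (i - n) (by omega)
      · rw [hrec' i (by omega)]
        have b1 := ih (i - 2) (by omega) n h2 (by omega)
        have b2 := ih (i - s) (by omega) n h2 (by omega)
        have e1 : p * M n + q * M n = M n := by rw [← add_mul, hpq, one_mul]
        linarith [mul_le_mul_of_nonneg_left b1 hp.le, mul_le_mul_of_nonneg_left b2 hq.le]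
  have F4' : ∀ i n, 2 ≤ n → n ≤ i → μ n ≤ h i := by
    intro i
    induction i using Nat.strong_induction_on with
    | _ i ih =>
      intro n h2 hni
      by_cases hi : i < n + s
      · have : i = n + (i - n) := by omega
        rw [this]; exact F1' n (i - n) (by omega)
      · rw [hrec' i (by omega)]
        have b1 := ih (i - 2) (by omega) n h2 (by omega)
        have b2 := ih (i - s) (by omega) n h2 (by omega)
        have e1 : p * μ n + q * μ n = μ n := by rw [← add_mul, hpq, one_mul]
        linarith [mul_le_mul_of_nonneg_left b1 hp.le, mul_le_mul_of_nonneg_left b2 hq.le]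
  have Mmono : ∀ n n', 2 ≤ n → n ≤ n' → M n' ≤ M n := by
    intro n n' h2 hnn
    apply Finset.sup'_le
    intro t ht
    exact F4 (n' + t) n h2 (by omega)
  have μmono : ∀ n n', 2 ≤ n → n ≤ n' → μ n ≤ μ n' := by
    intro n n' h2 hnn
    apply Finset.le_inf'
    intro t ht
    exact F4' (n' + t) n h2 (by omega)
  -- contraction
  set ε : ℝ := q^2 * p^(2*s) with hε
  have hεpos : 0 < ε := by positivity
  have F6 : ∀ n, 2 ≤ n → M (n + 3*s) ≤ M n - ε * (M n - μ n) := by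
    intro n h2
    obtain ⟨t0, ht0mem, ht0⟩ := Finset.exists_mem_eq_inf' hne (fun t => h (n + t))
    rw [Finset.mem_range] at ht0mem
    set j := n + t0 with hj
    have hΔ : 0 ≤ M n - μ n := by linarith [F2 n]
    have stepS : ∀ i w, n ≤ i → 0 ≤ w → h i ≤ M n - w * (M n - μ n) →
        h (i + s) ≤ M n - (q * w) * (M n - μ n) := by
      intro i w hni hw hhi
      have e := hrec' (i + s) (by omega)
      rw [show i + s - 2 = i + (s - 2) by omega, show i + s - s = i by omega] at e
      have b1 := F4 (i + (s - 2)) n h2 (by omega)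
      have e1 : p * M n + q * M n = M n := by rw [← add_mul, hpq, one_mul]
      have t1 := mul_le_mul_of_nonneg_left b1 hp.le
      have t2 := mul_le_mul_of_nonneg_left hhi hq.le
      nlinarith [t1, t2]
    have step2 : ∀ i w, n + s ≤ i → 0 ≤ w → h i ≤ M n - w * (M n - μ n) →
        h (i + 2) ≤ M n - (p * w) * (M n - μ n) := by
      intro i w hni hw hhi
      have e := hrec' (i + 2) (by omega)
      rw [show i + 2 - 2 = i by omega, show i + 2 - s = i - s + 2 by omega] at e
      have b1 := F4 (i - s + 2) n h2 (by omega)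
      have e1 : p * M n + q * M n = M n := by rw [← add_mul, hpq, one_mul]
      have t1 := mul_le_mul_of_nonneg_left b1 hq.le
      have t2 := mul_le_mul_of_nonneg_left hhi hp.le
      nlinarith [t1, t2]
    have base : h j ≤ M n - 1 * (M n - μ n) := by
      have : h j = μ n := ht0.symm
      linarith [this.le]
    have b1 : h (j + s) ≤ M n - (q * 1) * (M n - μ n) := stepS j 1 (by omega) one_pos.le base
    have b2 : h (j + s + s) ≤ M n - (q * (q * 1)) * (M n - μ n) :=
      stepS (j + s) (q * 1) (by omega) (by positivity) b1
    have c1 : ∀ α : ℕ, h (j + s + 2 * α) ≤ M n - (q * p ^ α) * (M n - μ n) := by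
      intro α
      induction α with
      | zero => simpa using b1
      | succ α ihα =>
        have := step2 (j + s + 2 * α) (q * p ^ α) (by omega) (by positivity) ihα
        rw [show j + s + 2 * α + 2 = j + s + 2 * (α + 1) by omega] at this
        have e : p * (q * p ^ α) = q * p ^ (α + 1) := by ring
        rw [e] at this
        exact this
    have c2 : ∀ α : ℕ, h (j + 2 * s + 2 * α) ≤ M n - (q ^ 2 * p ^ α) * (M n - μ n) := by
      intro α
      induction α with
      | zero =>
        have e : q ^ 2 * p ^ 0 = q * (q * 1) := by ring
        rw [e]
        have : j + 2 * s + 2 * 0 = j + s + s := by omega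
        rw [this]
        exact b2
      | succ α ihα =>
        have := step2 (j + 2 * s + 2 * α) (q ^ 2 * p ^ α) (by omega) (by positivity) ihα
        rw [show j + 2 * s + 2 * α + 2 = j + 2 * s + 2 * (α + 1) by omega] at this
        have e : p * (q ^ 2 * p ^ α) = q ^ 2 * p ^ (α + 1) := by ring
        rw [e] at this
        exact this
    apply Finset.sup'_le
    intro t htmem
    rw [Finset.mem_range] at htmem
    -- index : n + 3*s + t
    have hcover : h (n + 3 * s + t) ≤ M n - ε * (M n - μ n) := by
      by_cases hpar : (s + t - t0) % 2 = 0
      · -- use c2 with α = (s + t - t0)/2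
        set α := (s + t - t0) / 2 with hα
        have hidx : n + 3 * s + t = j + 2 * s + 2 * α := by omega
        have hαle : α ≤ 2 * s := by omega
        have hw : ε ≤ q ^ 2 * p ^ α := by
          rw [hε]
          apply mul_le_mul_of_nonneg_left _ (by positivity)
          exact pow_le_pow_of_le_one hp.le hp1 hαle
        have := c2 α
        rw [← hidx] at this
        nlinarith [mul_le_mul_of_nonneg_right hw hΔ]
      · -- s + t - t0 odd, use c1 with α = (2*s + t - t0)/2
        set α := (2 * s + t - t0) / 2 with hα
        have hidx : n + 3 * s + t = j + s + 2 * α := by omega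
        have hαle : α ≤ 2 * s := by omega
        have hw : ε ≤ q * p ^ α := by
          rw [hε]
          have h1 : q ^ 2 ≤ q := by nlinarith
          have h2 : p ^ (2*s) ≤ p ^ α := pow_le_pow_of_le_one hp.le hp1 hαle
          have h3 : (0:ℝ) ≤ p ^ (2*s) := by positivity
          nlinarith [pow_nonneg hp.le α, pow_nonneg hq.le 2]
        have := c1 α
        rw [← hidx] at this
        nlinarith [mul_le_mul_of_nonneg_right hw hΔ]
    exact hcover.trans (le_refl _)
  -- limits
  set Mf : ℕ → ℝ := fun j => M (j + 2) with hMf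
  set mf : ℕ → ℝ := fun j => μ (j + 2) with hmf
  have hMfanti : Antitone Mf := fun a b hab => Mmono (a + 2) (b + 2) (by omega) (by omega)
  have hmfmono : Monotone mf := fun a b hab => μmono (a + 2) (b + 2) (by omega) (by omega)
  have hbdd : BddBelow (Set.range Mf) := by
    refine ⟨μ 2, ?_⟩
    rintro x ⟨j, rfl⟩
    exact le_trans (μmono 2 (j + 2) le_rfl (by omega)) (F2 _)
  have hbdd2 : BddAbove (Set.range mf) := by
    refine ⟨M 2, ?_⟩
    rintro x ⟨j, rfl⟩
    exact le_trans (F2 _) (Mmono 2 (j + 2) le_rfl (by omega))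
  have hLt : Tendsto Mf atTop (nhds (⨅ j, Mf j)) := tendsto_atTop_ciInf hMfanti hbdd
  have hlt : Tendsto mf atTop (nhds (⨆ j, mf j)) := tendsto_atTop_ciSup hmfmono hbdd2
  set L := ⨅ j, Mf j with hLdef
  set l := ⨆ j, mf j with hldef
  have hlL : l ≤ L := le_of_tendsto_of_tendsto' hlt hLt (fun j => F2 _)
  have hcontr : L ≤ L - ε * (L - l) := by
    have h1 : Tendsto (fun j => Mf (j + 3 * s)) atTop (nhds L) :=
      hLt.comp (tendsto_add_atTop_nat (3 * s))
    have h2 : Tendsto (fun j => Mf j - ε * (Mf j - mf j)) atTop (nhds (L - ε * (L - l))) :=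
      hLt.sub ((hLt.sub hlt).const_mul ε)
    refine le_of_tendsto_of_tendsto' h1 h2 (fun j => ?_)
    have := F6 (j + 2) (by omega)
    rw [show j + 2 + 3 * s = j + 3 * s + 2 by omega] at this
    exact this
  have hLl : L = l := by
    have h4 : ε * (L - l) ≤ 0 := by linarith
    have h5 : L ≤ l := by nlinarith
    linarith
  have hsq : Tendsto (fun j => h (j + 2)) atTop (nhds L) := by
    have hlt' : Tendsto mf atTop (nhds L) := by rw [hLl]; exact hlt
    apply tendsto_of_tendsto_of_tendsto_of_le_of_le hlt' hLt
    · intro j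
      have := F1' (j + 2) 0 (by omega)
      simpa using this
    · intro j
      have := F1 (j + 2) 0 (by omega)
      simpa using this
  have hfin : Tendsto h atTop (nhds L) := by
    rw [← tendsto_add_atTop_iff_nat 2]
    exact hsq
  refine ⟨L, ?_, hfin⟩
  have h0 : mf 0 ≤ l := le_ciSup hbdd2 0
  have h1 : (0:ℝ) < mf 0 := F3 2
  rw [hLl]
  linarith

end Stmt15

open Filter

/-- For fixed `d ≥ 1` and any `0 ≤ k ≤ d−1`, the sequence `c_n(k)`
satisfies `c_n(k) ≥ 2^⌈n/2⌉`, and `c_n(k) ~ r_k·λ(d)^(n/2)` as `n → ∞` for some constant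
`r_k > 0`, where `λ(d)` is the unique positive solution of `λ^(d−1/2)(λ−2) = 1`. -/
theorem stmt15 (d : ℕ) (hd : 1 ≤ d) (l : ℝ) (hl : 0 < l)
    (hleq : l ^ ((d : ℝ) - 1 / 2) * (l - 2) = 1) (k : ℕ) (hk : k ≤ d - 1) :
    (∀ n : ℕ, (2 : ℕ) ^ ((n + 1) / 2) ≤ cn d n k) ∧
    ∃ r : ℝ, 0 < r ∧
      Tendsto (fun n : ℕ => (cn d n k : ℝ) / l ^ ((n : ℝ) / 2)) atTop (nhds r) := by
  constructor
  · exact fun n => Stmt15.lower_bound d n k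
  · set μR := Real.sqrt l with hμR
    have hl0 : 0 < μR := Real.sqrt_pos.mpr hl
    have hμ2 : μR ^ 2 = l := Real.sq_sqrt hl.le
    have hl2 : 2 < l := by
      by_contra hcon
      push_neg at hcon
      have h1 : 0 < l ^ ((d : ℝ) - 1 / 2) := Real.rpow_pos_of_pos hl _
      nlinarith [hleq]
    have hμ1 : 1 < μR := by nlinarith
    have hpow : l ^ ((d : ℝ) - 1 / 2) = μR ^ (2 * d - 1) := by
      rw [Real.rpow_sub hl, Real.rpow_natCast, ← Real.sqrt_eq_rpow, ← hμR, ← hμ2,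
        ← pow_mul]
      have he : 2 * d = (2 * d - 1) + 1 := by omega
      conv_lhs => rw [he, pow_succ]
      field_simp
    have h2 : μR ^ (2*d-1) * μR ^ 2 = μR ^ (2*d+1) := by
      rw [← pow_add]; congr 1; omega
    have hkey : μR ^ (2 * d + 1) = 2 * μR ^ (2 * d - 1) + 1 := by
      have h1 : μR ^ (2 * d - 1) * (l - 2) = 1 := by rw [← hpow]; exact hleq
      rw [← hμ2] at h1
      nlinarith [h1, h2]
    set p := 2 / μR ^ 2 with hpdef
    set q := 1 / μR ^ (2 * d + 1) with hqdef
    have hppos : 0 < p := by positivity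
    have hqpos : 0 < q := by positivity
    have hne2 : μR ^ 2 ≠ 0 := by positivity
    have hne3 : μR ^ (2*d+1) ≠ 0 := by positivity
    have hpq : p + q = 1 := by
      rw [hpdef, hqdef]
      field_simp
      nlinarith [hkey, h2]
    set h : ℕ → ℝ := fun n => (cn d n k : ℝ) / μR ^ n with hh
    have hpos : ∀ n, 0 < h n := by
      intro n
      apply div_pos _ (by positivity)
      exact_mod_cast Stmt15.cn_pos d n k
    have hrec : ∀ n, h (n + (2*d+1) + 2) = p * h (n + (2*d+1)) + q * h (n + 2) := by
      intro n
      have hc := Stmt15.cn_rec d k hd hk n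
      rw [hh]
      simp only []
      rw [show n + (2*d+1) + 2 = n + 2*d + 3 by omega,
        show n + (2*d+1) = n + 2*d + 1 by omega, hc]
      push_cast
      rw [hpdef, hqdef]
      field_simp
      ring
    obtain ⟨r, hr, htend⟩ := Stmt15.converge_aux (2*d+1) (by omega) (by omega) p q
      hppos hqpos hpq h hpos hrec
    refine ⟨r, hr, ?_⟩
    have hfun : ∀ n : ℕ, l ^ ((n : ℝ) / 2) = μR ^ n := by
      intro n
      rw [show ((n:ℝ)/2) = (1/2) * (n:ℝ) by ring, Real.rpow_mul hl.le,
        ← Real.sqrt_eq_rpow, ← hμR, Real.rpow_natCast]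
    have heq : (fun n : ℕ => (cn d n k : ℝ) / l ^ ((n : ℝ) / 2)) = h := by
      funext n
      rw [hfun n, hh]
    rw [heq]
    exact htend
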